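/- Let μ₀ ∈ (0, 1/3] and μᵢ = h(μᵢ₋₁), where h is the inverse of g(x) = (x+x²)/(1+x²). Then for all i ≥ 1, μᵢ < 1/i + 2(ln i)/i². -/

import Mathlib

noncomputable def h (y : ℝ) : ℝ := (-1 + Real.sqrt (1 + 4*y*(1-y))) / (2*(1-y))

noncomputable def museq (μ₀ : ℝ) : ℕ → ℝ
  | 0 => μ₀
  | i + 1 => h (museq μ₀ i)

lemma h_basic {y : ℝ} (hy0 : 0 < y) (hy1 : y < 1) :
    0 < h y ∧ h y < y ∧ y * (1 + (h y)^2) = h y * (1 + h y) := by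
  have harg : (0:ℝ) ≤ 1 + 4*y*(1-y) := by nlinarith
  set s := Real.sqrt (1 + 4*y*(1-y)) with hs
  have hs2 : s^2 = 1 + 4*y*(1-y) := Real.sq_sqrt harg
  have hsnn : 0 ≤ s := Real.sqrt_nonneg _
  have hs1 : 1 < s := by nlinarith
  have hden : 0 < 2*(1-y) := by linarith
  have hxdef : h y = (-1 + s) / (2*(1-y)) := rfl
  have hx0 : 0 < h y := by
    rw [hxdef]; apply div_pos (by linarith) hden
  have hxy : h y < y := by
    rw [hxdef, div_lt_iff₀ hden]; nlinarith
  have hid : y * (1 + (h y)^2) = h y * (1 + h y) := by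
    have h2 : 2*(1-y) * h y = -1 + s := by
      rw [hxdef]; field_simp [show (1:ℝ) - y ≠ 0 by linarith]
    have : (2*(1-y) * h y + 1)^2 = s^2 := by rw [h2]; ring
    nlinarith [this]
  exact ⟨hx0, hxy, hid⟩

lemma inv_step {y b : ℝ} (hy0 : 0 < y) (hy1 : y < 1) (hb : 1 ≤ b) (hyb : y ≤ 1/b) :
    b + (b-1)/(b+1) ≤ 1 / h y := by
  obtain ⟨hx0, hxy, hid⟩ := h_basic hy0 hy1
  set x := h y with hx
  have hb0 : (0:ℝ) < b := by linarith
  have hyb' : y * b ≤ 1 := by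
    rw [le_div_iff₀ hb0] at hyb; linarith
  have hx1 : x < 1 := by linarith
  have hinv : 1/x = 1/y + (1-x)/(1+x) := by
    have h1x : (0:ℝ) < 1 + x := by linarith
    field_simp
    nlinarith [hid]
  have h2 : b ≤ 1/y := by
    rw [le_div_iff₀ hy0]; linarith
  have h3 : (b-1)/(b+1) ≤ (1-x)/(1+x) := by
    rw [div_le_div_iff₀ (by linarith) (by linarith)]
    have hbx : b * x ≤ 1 := by nlinarith
    nlinarith
  rw [hinv]; linarith

lemma chain_step {y b c : ℝ} (hy0 : 0 < y) (hyb : y ≤ 1/b) (hb : 1 < b) (hc0 : 0 < c)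
    (hcb : c ≤ b + (b-1)/(b+1)) : 0 < h y ∧ h y ≤ 1/c := by
  have hy1 : y < 1 := lt_of_le_of_lt hyb (by rw [div_lt_one (by linarith)]; exact hb)
  obtain ⟨hx0, hxy, _⟩ := h_basic hy0 hy1
  have hkey := inv_step hy0 hy1 (le_of_lt hb) hyb
  have hc1 : c ≤ 1 / h y := le_trans hcb hkey
  have : c * h y ≤ 1 := by
    rw [le_div_iff₀ hx0] at hc1; linarith
  constructor
  · exact hx0
  · rw [le_div_iff₀ hc0]; linarith [mul_comm c (h y)]

lemma chain_step' (μ₀ : ℝ) {b c : ℝ} (i j : ℕ) (hj : j = i + 1)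
    (hy0 : 0 < museq μ₀ i) (hyb : museq μ₀ i ≤ 1/b) (hb : 1 < b) (hc0 : 0 < c)
    (hcb : c ≤ b + (b-1)/(b+1)) : 0 < museq μ₀ j ∧ museq μ₀ j ≤ 1/c := by
  subst hj
  simp only [museq]
  exact chain_step hy0 hyb hb hc0 hcb

lemma final_small {qv d k : ℝ} (hk : 0 < k) (hd : d ≤ Real.log k)
    (hnum : 1/qv < 1/k + 2*d/k^2) : 1/qv < 1/k + 2*Real.log k/k^2 := by
  have hk2 : (0:ℝ) < k^2 := by positivity
  have h2 : 2*d/k^2 ≤ 2*Real.log k/k^2 := by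
    gcongr
  linarith

set_option maxHeartbeats 1000000 in
lemma poly_step {m L1 L : ℝ} (hm : 37 ≤ m) (h1 : 3.6 ≤ L1) (h2 : L1 ≤ m)
    (h3 : L1 + 1/(m+1) ≤ L) :
    (m+1)^2/((m+1)+2*L) < m^2/(m+2*L1) +
      (m^2/(m+2*L1) - 1)/(m^2/(m+2*L1) + 1) := by
  have hw : (0:ℝ) ≤ m - 37 := by linarith
  have hv : (0:ℝ) ≤ L1 - 3.6 := by linarith
  have hu : (0:ℝ) ≤ m - L1 := by linarith
  have hn0 : (0:ℝ) < m + 1 := by linarith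
  have h1n : (0:ℝ) < 1/(m+1) := by positivity
  have key : (m+1)^3 * (m^2 + (m+2*L1)) * (m+2*L1) <
      (m^4 + 2*m^2*(m+2*L1) - (m+2*L1)^2) * ((m+1)^2 + 2*L1*(m+1) + 2) := by
    have hcert : (m^4 + 2*m^2*(m+2*L1) - (m+2*L1)^2) * ((m+1)^2 + 2*L1*(m+1) + 2)
        - (m+1)^3 * (m^2 + (m+2*L1)) * (m+2*L1)
        = ((7400092/125) + (16421192/25)*(L1-3.6)^1 + (831096/5)*(L1-3.6)^2 + (1981664/125)*(m-37)^1 + (1476404/25)*(m-37)^1*(L1-3.6)^1 + (72792/5)*(m-37)^1*(L1-3.6)^2 + (17612/25)*(m-37)^2 + (8688/5)*(m-37)^2*(L1-3.6)^1 + 420*(m-37)^2*(L1-3.6)^2 + (216/25)*(m-37)^3 + (84/5)*(m-37)^3*(L1-3.6)^1 + 4*(m-37)^3*(L1-3.6)^2)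
          + 8*(L1-3.6)^2*(m+1)*(m-L1) := by ring
    nlinarith [hcert, mul_nonneg hw hv, mul_nonneg (mul_nonneg hw hw) hv,
      mul_nonneg hw (mul_nonneg hv hv), sq_nonneg (L1-3.6), sq_nonneg (m-37),
      mul_nonneg (mul_nonneg hw hw) hw,
      mul_nonneg (mul_nonneg (mul_nonneg hw hw) hw) hv,
      mul_nonneg (mul_nonneg hw hw) (mul_nonneg hv hv),
      mul_nonneg (mul_nonneg (mul_nonneg hw hw) hw) (mul_nonneg hv hv),
      mul_nonneg (mul_nonneg hw hv) hv,
      mul_nonneg (mul_nonneg (mul_nonneg hv hv) (le_of_lt hn0)) hu]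
  have hd1 : (0:ℝ) < m + 2*L1 := by linarith
  have hd2 : (0:ℝ) < (m+1)^2 + 2*L1*(m+1) + 2 := by nlinarith
  have hd3 : (0:ℝ) < (m+1) + 2*L := by linarith
  have hb1 : (0:ℝ) < m^2/(m+2*L1) + 1 := by positivity
  have g1 : (m+1)^2/((m+1)+2*L) ≤ (m+1)^3/((m+1)^2+2*L1*(m+1)+2) := by
    rw [div_le_div_iff₀ hd3 hd2]
    have e1 : (m+1)^3*(1/(m+1)) = (m+1)^2 := by field_simp
    nlinarith [mul_le_mul_of_nonneg_left h3 (by positivity : (0:ℝ) ≤ (m+1)^3), e1]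
  have e2 : m^2/(m+2*L1) + (m^2/(m+2*L1) - 1)/(m^2/(m+2*L1) + 1)
      = (m^4 + 2*m^2*(m+2*L1) - (m+2*L1)^2) / ((m+2*L1)*(m^2 + (m+2*L1))) := by
    rw [div_add_div _ _ (ne_of_gt hd1) (ne_of_gt hb1)]
    rw [div_eq_div_iff (by positivity) (by positivity)]
    field_simp
    ring
  have g2 : (m+1)^3/((m+1)^2+2*L1*(m+1)+2) <
      (m^4 + 2*m^2*(m+2*L1) - (m+2*L1)^2) / ((m+2*L1)*(m^2 + (m+2*L1))) := by
    rw [div_lt_div_iff₀ hd2 (by positivity)]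
    nlinarith [key]
  rw [e2]
  exact lt_of_le_of_lt g1 g2

lemma museq_bounds (μ₀ : ℝ) (h0 : 0 < μ₀) (h1 : μ₀ ≤ 1/3) :
    ∀ i, 0 < museq μ₀ i ∧ museq μ₀ i ≤ 1/3 := by
  intro i
  induction i with
  | zero => exact ⟨h0, by simpa [museq] using h1⟩
  | succ n ih =>
    obtain ⟨hp, hle⟩ := ih
    obtain ⟨hx0, hxy, _⟩ := h_basic hp (by linarith)
    exact ⟨hx0, by simpa [museq] using le_trans (le_of_lt hxy) hle⟩

set_option maxHeartbeats 2000000 in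
lemma main_ind (μ₀ : ℝ) (h0 : 0 < μ₀) (h1 : μ₀ ≤ 1/3)
    (hbase : museq μ₀ 38 < 1/(38:ℝ) + 2 * Real.log 38 / (38:ℝ)^2) :
    ∀ n : ℕ, 38 ≤ n → museq μ₀ n < 1/(n:ℝ) + 2 * Real.log n / (n:ℝ)^2 := by
  have hbnd := museq_bounds μ₀ h0 h1
  intro n hn
  induction n, hn using Nat.le_induction with
  | base =>
    push_cast
    exact hbase
  | succ n hn ih =>
    have hN : (38:ℝ) ≤ (n:ℝ) := by exact_mod_cast hn
    set N : ℝ := (n:ℝ) with hNdef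
    have hN0 : (0:ℝ) < N := by linarith
    have hL1lb : (3.6:ℝ) ≤ Real.log N := by
      have he : Real.exp 1 < 2.7182818286 := Real.exp_one_lt_d9
      have h36 : (3.6:ℝ) < Real.log 38 := by
        rw [Real.lt_log_iff_exp_lt (by norm_num)]
        have hp5 : Real.exp 3.6 ^ (5:ℕ) = Real.exp 1 ^ (18:ℕ) := by
          rw [← Real.exp_nat_mul, ← Real.exp_nat_mul]; norm_num
        have hlt : Real.exp 3.6 ^ (5:ℕ) < 38 ^ (5:ℕ) := by
          rw [hp5]
          calc Real.exp 1 ^ (18:ℕ) ≤ 2.7182818286 ^ (18:ℕ) := by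
                apply pow_le_pow_left₀ (le_of_lt (Real.exp_pos 1)) (le_of_lt he)
            _ < 38 ^ (5:ℕ) := by norm_num
        exact lt_of_pow_lt_pow_left₀ 5 (by norm_num) hlt
      exact le_of_lt (lt_of_lt_of_le h36 (Real.log_le_log (by norm_num) hN))
    have hL1ub : Real.log N ≤ N - 1 := by
      have := Real.log_lt_sub_one_of_pos hN0 (by linarith)
      linarith
    have hLlb : Real.log N + 1/(N+1) ≤ Real.log (N+1) := by
      have hq : Real.log (N/(N+1)) ≤ N/(N+1) - 1 := by
        have := Real.log_lt_sub_one_of_pos (x := N/(N+1)) (by positivity) (by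
          intro hcon
          rw [div_eq_one_iff_eq (by linarith)] at hcon
          linarith)
        linarith
      rw [Real.log_div (by linarith) (by linarith)] at hq
      have he : N/(N+1) - 1 = -(1/(N+1)) := by field_simp; ring
      rw [he] at hq
      linarith
    have hps := poly_step (m := N) (L1 := Real.log N) (L := Real.log (N+1))
      (by linarith) hL1lb (by linarith) hLlb
    have hdN : (0:ℝ) < N + 2*Real.log N := by linarith
    have hb1 : (1:ℝ) ≤ N^2/(N+2*Real.log N) := by
      rw [le_div_iff₀ hdN]; nlinarith
    have hyb : museq μ₀ n ≤ 1/(N^2/(N+2*Real.log N)) := by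
      rw [one_div_div]
      have heq : (N+2*Real.log N)/N^2 = 1/N + 2*Real.log N/N^2 := by
        field_simp
      rw [heq]
      exact le_of_lt ih
    have hstep := inv_step (hbnd n).1 (by linarith [(hbnd n).2]) hb1 hyb
    have hx := (hbnd (n+1)).1
    have hxeq : museq μ₀ (n+1) = h (museq μ₀ n) := by simp only [museq]
    rw [← hxeq] at hstep
    have hkey : (N+1)^2/((N+1)+2*Real.log (N+1)) < 1 / museq μ₀ (n+1) :=
      lt_of_lt_of_le hps hstep
    have hlogN1 : (0:ℝ) ≤ Real.log (N+1) := Real.log_nonneg (by linarith)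
    have hxlt : museq μ₀ (n+1) < ((N+1)+2*Real.log (N+1))/(N+1)^2 := by
      rw [lt_div_iff₀ (by positivity : (0:ℝ) < (N+1)^2)]
      have h5 : (N+1)^2/((N+1)+2*Real.log (N+1)) * museq μ₀ (n+1) < 1 := by
        rw [lt_div_iff₀ hx] at hkey
        linarith
      rw [div_mul_eq_mul_div, div_lt_one (by linarith)] at h5
      nlinarith [h5]
    have hcast : ((n+1:ℕ):ℝ) = N + 1 := by push_cast [hNdef]; ring
    rw [hcast]
    have heq2 : ((N+1)+2*Real.log (N+1))/(N+1)^2 = 1/(N+1) + 2*Real.log (N+1)/(N+1)^2 := by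
      field_simp
    rw [heq2] at hxlt
    exact hxlt

set_option maxHeartbeats 4000000 in
theorem stmt_10 (μ₀ : ℝ) (h0 : 0 < μ₀) (h1 : μ₀ ≤ 1/3) :
    ∀ i : ℕ, 1 ≤ i →
      museq μ₀ i < 1/(i : ℝ) + 2 * Real.log i / (i : ℝ)^2 := by
  have hlog2 : (0.6931471803:ℝ) < Real.log 2 := Real.log_two_gt_d9
  have hlogk : ∀ (k : ℕ) (d x : ℝ), (2:ℝ)^k ≤ x → d ≤ 0.6931471803 * k →
      d ≤ Real.log x := by
    intro k d x hx hd
    have h2 : Real.log ((2:ℝ)^k) ≤ Real.log x := Real.log_le_log (by positivity) hx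
    rw [Real.log_pow] at h2
    have h3 : (0.6931471803:ℝ) * k ≤ (k:ℝ) * Real.log 2 := by
      rw [mul_comm]
      exact mul_le_mul_of_nonneg_left (le_of_lt hlog2) (by positivity)
    linarith
  have c0 : 0 < museq μ₀ 0 ∧ museq μ₀ 0 ≤ 1/3 := ⟨h0, by simpa [museq] using h1⟩
  have c1 : 0 < museq μ₀ 1 ∧ museq μ₀ 1 ≤ 1/((7/2):ℝ) :=
    chain_step' μ₀ 0 1 (by norm_num) c0.1 c0.2 (by norm_num) (by norm_num) (by norm_num)
  have c2 : 0 < museq μ₀ 2 ∧ museq μ₀ 2 ≤ 1/((81/20):ℝ) :=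
    chain_step' μ₀ 1 2 (by norm_num) c1.1 c1.2 (by norm_num) (by norm_num) (by norm_num)
  have c3 : 0 < museq μ₀ 3 ∧ museq μ₀ 3 ≤ 1/((93/20):ℝ) :=
    chain_step' μ₀ 2 3 (by norm_num) c2.1 c2.2 (by norm_num) (by norm_num) (by norm_num)
  have c4 : 0 < museq μ₀ 4 ∧ museq μ₀ 4 ≤ 1/((529/100):ℝ) :=
    chain_step' μ₀ 3 4 (by norm_num) c3.1 c3.2 (by norm_num) (by norm_num) (by norm_num)
  have c5 : 0 < museq μ₀ 5 ∧ museq μ₀ 5 ≤ 1/((597/100):ℝ) :=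
    chain_step' μ₀ 4 5 (by norm_num) c4.1 c4.2 (by norm_num) (by norm_num) (by norm_num)
  have c6 : 0 < museq μ₀ 6 ∧ museq μ₀ 6 ≤ 1/((167/25):ℝ) :=
    chain_step' μ₀ 5 6 (by norm_num) c5.1 c5.2 (by norm_num) (by norm_num) (by norm_num)
  have c7 : 0 < museq μ₀ 7 ∧ museq μ₀ 7 ≤ 1/((741/100):ℝ) :=
    chain_step' μ₀ 6 7 (by norm_num) c6.1 c6.2 (by norm_num) (by norm_num) (by norm_num)
  have c8 : 0 < museq μ₀ 8 ∧ museq μ₀ 8 ≤ 1/((817/100):ℝ) :=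
    chain_step' μ₀ 7 8 (by norm_num) c7.1 c7.2 (by norm_num) (by norm_num) (by norm_num)
  have c9 : 0 < museq μ₀ 9 ∧ museq μ₀ 9 ≤ 1/((179/20):ℝ) :=
    chain_step' μ₀ 8 9 (by norm_num) c8.1 c8.2 (by norm_num) (by norm_num) (by norm_num)
  have c10 : 0 < museq μ₀ 10 ∧ museq μ₀ 10 ≤ 1/((487/50):ℝ) :=
    chain_step' μ₀ 9 10 (by norm_num) c9.1 c9.2 (by norm_num) (by norm_num) (by norm_num)
  have c11 : 0 < museq μ₀ 11 ∧ museq μ₀ 11 ≤ 1/((211/20):ℝ) :=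
    chain_step' μ₀ 10 11 (by norm_num) c10.1 c10.2 (by norm_num) (by norm_num) (by norm_num)
  have c12 : 0 < museq μ₀ 12 ∧ museq μ₀ 12 ≤ 1/((1137/100):ℝ) :=
    chain_step' μ₀ 11 12 (by norm_num) c11.1 c11.2 (by norm_num) (by norm_num) (by norm_num)
  have c13 : 0 < museq μ₀ 13 ∧ museq μ₀ 13 ≤ 1/((61/5):ℝ) :=
    chain_step' μ₀ 12 13 (by norm_num) c12.1 c12.2 (by norm_num) (by norm_num) (by norm_num)
  have c14 : 0 < museq μ₀ 14 ∧ museq μ₀ 14 ≤ 1/((326/25):ℝ) :=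
    chain_step' μ₀ 13 14 (by norm_num) c13.1 c13.2 (by norm_num) (by norm_num) (by norm_num)
  have c15 : 0 < museq μ₀ 15 ∧ museq μ₀ 15 ≤ 1/((1389/100):ℝ) :=
    chain_step' μ₀ 14 15 (by norm_num) c14.1 c14.2 (by norm_num) (by norm_num) (by norm_num)
  have c16 : 0 < museq μ₀ 16 ∧ museq μ₀ 16 ≤ 1/((59/4):ℝ) :=
    chain_step' μ₀ 15 16 (by norm_num) c15.1 c15.2 (by norm_num) (by norm_num) (by norm_num)
  have c17 : 0 < museq μ₀ 17 ∧ museq μ₀ 17 ≤ 1/((781/50):ℝ) :=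
    chain_step' μ₀ 16 17 (by norm_num) c16.1 c16.2 (by norm_num) (by norm_num) (by norm_num)
  have c18 : 0 < museq μ₀ 18 ∧ museq μ₀ 18 ≤ 1/((1649/100):ℝ) :=
    chain_step' μ₀ 17 18 (by norm_num) c17.1 c17.2 (by norm_num) (by norm_num) (by norm_num)
  have c19 : 0 < museq μ₀ 19 ∧ museq μ₀ 19 ≤ 1/((1737/100):ℝ) :=
    chain_step' μ₀ 18 19 (by norm_num) c18.1 c18.2 (by norm_num) (by norm_num) (by norm_num)
  have c20 : 0 < museq μ₀ 20 ∧ museq μ₀ 20 ≤ 1/((913/50):ℝ) :=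
    chain_step' μ₀ 19 20 (by norm_num) c19.1 c19.2 (by norm_num) (by norm_num) (by norm_num)
  have c21 : 0 < museq μ₀ 21 ∧ museq μ₀ 21 ≤ 1/((383/20):ℝ) :=
    chain_step' μ₀ 20 21 (by norm_num) c20.1 c20.2 (by norm_num) (by norm_num) (by norm_num)
  have c22 : 0 < museq μ₀ 22 ∧ museq μ₀ 22 ≤ 1/((401/20):ℝ) :=
    chain_step' μ₀ 21 22 (by norm_num) c21.1 c21.2 (by norm_num) (by norm_num) (by norm_num)
  have c23 : 0 < museq μ₀ 23 ∧ museq μ₀ 23 ≤ 1/((419/20):ℝ) :=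
    chain_step' μ₀ 22 23 (by norm_num) c22.1 c22.2 (by norm_num) (by norm_num) (by norm_num)
  have c24 : 0 < museq μ₀ 24 ∧ museq μ₀ 24 ≤ 1/((437/20):ℝ) :=
    chain_step' μ₀ 23 24 (by norm_num) c23.1 c23.2 (by norm_num) (by norm_num) (by norm_num)
  have c25 : 0 < museq μ₀ 25 ∧ museq μ₀ 25 ≤ 1/((569/25):ℝ) :=
    chain_step' μ₀ 24 25 (by norm_num) c24.1 c24.2 (by norm_num) (by norm_num) (by norm_num)
  have c26 : 0 < museq μ₀ 26 ∧ museq μ₀ 26 ≤ 1/((2367/100):ℝ) :=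
    chain_step' μ₀ 25 26 (by norm_num) c25.1 c25.2 (by norm_num) (by norm_num) (by norm_num)
  have c27 : 0 < museq μ₀ 27 ∧ museq μ₀ 27 ≤ 1/((1229/50):ℝ) :=
    chain_step' μ₀ 26 27 (by norm_num) c26.1 c26.2 (by norm_num) (by norm_num) (by norm_num)
  have c28 : 0 < museq μ₀ 28 ∧ museq μ₀ 28 ≤ 1/((51/2):ℝ) :=
    chain_step' μ₀ 27 28 (by norm_num) c27.1 c27.2 (by norm_num) (by norm_num) (by norm_num)
  have c29 : 0 < museq μ₀ 29 ∧ museq μ₀ 29 ≤ 1/((1321/50):ℝ) :=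
    chain_step' μ₀ 28 29 (by norm_num) c28.1 c28.2 (by norm_num) (by norm_num) (by norm_num)
  have c30 : 0 < museq μ₀ 30 ∧ museq μ₀ 30 ≤ 1/((1367/50):ℝ) :=
    chain_step' μ₀ 29 30 (by norm_num) c29.1 c29.2 (by norm_num) (by norm_num) (by norm_num)
  have c31 : 0 < museq μ₀ 31 ∧ museq μ₀ 31 ≤ 1/((1413/50):ℝ) :=
    chain_step' μ₀ 30 31 (by norm_num) c30.1 c30.2 (by norm_num) (by norm_num) (by norm_num)
  have c32 : 0 < museq μ₀ 32 ∧ museq μ₀ 32 ≤ 1/((2919/100):ℝ) :=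
    chain_step' μ₀ 31 32 (by norm_num) c31.1 c31.2 (by norm_num) (by norm_num) (by norm_num)
  have c33 : 0 < museq μ₀ 33 ∧ museq μ₀ 33 ≤ 1/((753/25):ℝ) :=
    chain_step' μ₀ 32 33 (by norm_num) c32.1 c32.2 (by norm_num) (by norm_num) (by norm_num)
  have c34 : 0 < museq μ₀ 34 ∧ museq μ₀ 34 ≤ 1/((621/20):ℝ) :=
    chain_step' μ₀ 33 34 (by norm_num) c33.1 c33.2 (by norm_num) (by norm_num) (by norm_num)
  have c35 : 0 < museq μ₀ 35 ∧ museq μ₀ 35 ≤ 1/((1599/50):ℝ) :=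
    chain_step' μ₀ 34 35 (by norm_num) c34.1 c34.2 (by norm_num) (by norm_num) (by norm_num)
  have c36 : 0 < museq μ₀ 36 ∧ museq μ₀ 36 ≤ 1/((3291/100):ℝ) :=
    chain_step' μ₀ 35 36 (by norm_num) c35.1 c35.2 (by norm_num) (by norm_num) (by norm_num)
  have c37 : 0 < museq μ₀ 37 ∧ museq μ₀ 37 ≤ 1/((677/20):ℝ) :=
    chain_step' μ₀ 36 37 (by norm_num) c36.1 c36.2 (by norm_num) (by norm_num) (by norm_num)
  have c38 : 0 < museq μ₀ 38 ∧ museq μ₀ 38 ≤ 1/((3479/100):ℝ) :=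
    chain_step' μ₀ 37 38 (by norm_num) c37.1 c37.2 (by norm_num) (by norm_num) (by norm_num)
  have hbase : museq μ₀ 38 < 1/(38:ℝ) + 2 * Real.log 38 / (38:ℝ)^2 := by
    have hlg := hlogk 5 (693147/200000) (38:ℝ) (by norm_num) (by norm_num)
    calc museq μ₀ 38 ≤ 1/((3479/100):ℝ) := c38.2
      _ < _ := final_small (by norm_num) hlg (by norm_num)
  have H := main_ind μ₀ h0 h1 hbase
  intro i hi
  rcases lt_or_ge i 38 with hlt | hge
  · interval_cases i
    · push_cast
      have hlg := hlogk 0 (0/1) (1:ℝ) (by norm_num) (by norm_num)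
      calc museq μ₀ 1 ≤ 1/((7/2):ℝ) := c1.2
        _ < _ := final_small (by norm_num) hlg (by norm_num)
    · push_cast
      have hlg := hlogk 1 (693147/1000000) (2:ℝ) (by norm_num) (by norm_num)
      calc museq μ₀ 2 ≤ 1/((81/20):ℝ) := c2.2
        _ < _ := final_small (by norm_num) hlg (by norm_num)
    · push_cast
      have hlg := hlogk 1 (693147/1000000) (3:ℝ) (by norm_num) (by norm_num)
      calc museq μ₀ 3 ≤ 1/((93/20):ℝ) := c3.2
        _ < _ := final_small (by norm_num) hlg (by norm_num)
    · push_cast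
      have hlg := hlogk 2 (693147/500000) (4:ℝ) (by norm_num) (by norm_num)
      calc museq μ₀ 4 ≤ 1/((529/100):ℝ) := c4.2
        _ < _ := final_small (by norm_num) hlg (by norm_num)
    · push_cast
      have hlg := hlogk 2 (693147/500000) (5:ℝ) (by norm_num) (by norm_num)
      calc museq μ₀ 5 ≤ 1/((597/100):ℝ) := c5.2
        _ < _ := final_small (by norm_num) hlg (by norm_num)
    · push_cast
      have hlg := hlogk 2 (693147/500000) (6:ℝ) (by norm_num) (by norm_num)
      calc museq μ₀ 6 ≤ 1/((167/25):ℝ) := c6.2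
        _ < _ := final_small (by norm_num) hlg (by norm_num)
    · push_cast
      have hlg := hlogk 2 (693147/500000) (7:ℝ) (by norm_num) (by norm_num)
      calc museq μ₀ 7 ≤ 1/((741/100):ℝ) := c7.2
        _ < _ := final_small (by norm_num) hlg (by norm_num)
    · push_cast
      have hlg := hlogk 3 (2079441/1000000) (8:ℝ) (by norm_num) (by norm_num)
      calc museq μ₀ 8 ≤ 1/((817/100):ℝ) := c8.2
        _ < _ := final_small (by norm_num) hlg (by norm_num)
    · push_cast
      have hlg := hlogk 3 (2079441/1000000) (9:ℝ) (by norm_num) (by norm_num)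
      calc museq μ₀ 9 ≤ 1/((179/20):ℝ) := c9.2
        _ < _ := final_small (by norm_num) hlg (by norm_num)
    · push_cast
      have hlg := hlogk 3 (2079441/1000000) (10:ℝ) (by norm_num) (by norm_num)
      calc museq μ₀ 10 ≤ 1/((487/50):ℝ) := c10.2
        _ < _ := final_small (by norm_num) hlg (by norm_num)
    · push_cast
      have hlg := hlogk 3 (2079441/1000000) (11:ℝ) (by norm_num) (by norm_num)
      calc museq μ₀ 11 ≤ 1/((211/20):ℝ) := c11.2
        _ < _ := final_small (by norm_num) hlg (by norm_num)
    · push_cast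
      have hlg := hlogk 3 (2079441/1000000) (12:ℝ) (by norm_num) (by norm_num)
      calc museq μ₀ 12 ≤ 1/((1137/100):ℝ) := c12.2
        _ < _ := final_small (by norm_num) hlg (by norm_num)
    · push_cast
      have hlg := hlogk 3 (2079441/1000000) (13:ℝ) (by norm_num) (by norm_num)
      calc museq μ₀ 13 ≤ 1/((61/5):ℝ) := c13.2
        _ < _ := final_small (by norm_num) hlg (by norm_num)
    · push_cast
      have hlg := hlogk 3 (2079441/1000000) (14:ℝ) (by norm_num) (by norm_num)
      calc museq μ₀ 14 ≤ 1/((326/25):ℝ) := c14.2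
        _ < _ := final_small (by norm_num) hlg (by norm_num)
    · push_cast
      have hlg := hlogk 3 (2079441/1000000) (15:ℝ) (by norm_num) (by norm_num)
      calc museq μ₀ 15 ≤ 1/((1389/100):ℝ) := c15.2
        _ < _ := final_small (by norm_num) hlg (by norm_num)
    · push_cast
      have hlg := hlogk 4 (693147/250000) (16:ℝ) (by norm_num) (by norm_num)
      calc museq μ₀ 16 ≤ 1/((59/4):ℝ) := c16.2
        _ < _ := final_small (by norm_num) hlg (by norm_num)
    · push_cast
      have hlg := hlogk 4 (693147/250000) (17:ℝ) (by norm_num) (by norm_num)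
      calc museq μ₀ 17 ≤ 1/((781/50):ℝ) := c17.2
        _ < _ := final_small (by norm_num) hlg (by norm_num)
    · push_cast
      have hlg := hlogk 4 (693147/250000) (18:ℝ) (by norm_num) (by norm_num)
      calc museq μ₀ 18 ≤ 1/((1649/100):ℝ) := c18.2
        _ < _ := final_small (by norm_num) hlg (by norm_num)
    · push_cast
      have hlg := hlogk 4 (693147/250000) (19:ℝ) (by norm_num) (by norm_num)
      calc museq μ₀ 19 ≤ 1/((1737/100):ℝ) := c19.2
        _ < _ := final_small (by norm_num) hlg (by norm_num)
    · push_cast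
      have hlg := hlogk 4 (693147/250000) (20:ℝ) (by norm_num) (by norm_num)
      calc museq μ₀ 20 ≤ 1/((913/50):ℝ) := c20.2
        _ < _ := final_small (by norm_num) hlg (by norm_num)
    · push_cast
      have hlg := hlogk 4 (693147/250000) (21:ℝ) (by norm_num) (by norm_num)
      calc museq μ₀ 21 ≤ 1/((383/20):ℝ) := c21.2
        _ < _ := final_small (by norm_num) hlg (by norm_num)
    · push_cast
      have hlg := hlogk 4 (693147/250000) (22:ℝ) (by norm_num) (by norm_num)
      calc museq μ₀ 22 ≤ 1/((401/20):ℝ) := c22.2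
        _ < _ := final_small (by norm_num) hlg (by norm_num)
    · push_cast
      have hlg := hlogk 4 (693147/250000) (23:ℝ) (by norm_num) (by norm_num)
      calc museq μ₀ 23 ≤ 1/((419/20):ℝ) := c23.2
        _ < _ := final_small (by norm_num) hlg (by norm_num)
    · push_cast
      have hlg := hlogk 4 (693147/250000) (24:ℝ) (by norm_num) (by norm_num)
      calc museq μ₀ 24 ≤ 1/((437/20):ℝ) := c24.2
        _ < _ := final_small (by norm_num) hlg (by norm_num)
    · push_cast
      have hlg := hlogk 4 (693147/250000) (25:ℝ) (by norm_num) (by norm_num)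
      calc museq μ₀ 25 ≤ 1/((569/25):ℝ) := c25.2
        _ < _ := final_small (by norm_num) hlg (by norm_num)
    · push_cast
      have hlg := hlogk 4 (693147/250000) (26:ℝ) (by norm_num) (by norm_num)
      calc museq μ₀ 26 ≤ 1/((2367/100):ℝ) := c26.2
        _ < _ := final_small (by norm_num) hlg (by norm_num)
    · push_cast
      have hlg := hlogk 4 (693147/250000) (27:ℝ) (by norm_num) (by norm_num)
      calc museq μ₀ 27 ≤ 1/((1229/50):ℝ) := c27.2
        _ < _ := final_small (by norm_num) hlg (by norm_num)
    · push_cast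
      have hlg := hlogk 4 (693147/250000) (28:ℝ) (by norm_num) (by norm_num)
      calc museq μ₀ 28 ≤ 1/((51/2):ℝ) := c28.2
        _ < _ := final_small (by norm_num) hlg (by norm_num)
    · push_cast
      have hlg := hlogk 4 (693147/250000) (29:ℝ) (by norm_num) (by norm_num)
      calc museq μ₀ 29 ≤ 1/((1321/50):ℝ) := c29.2
        _ < _ := final_small (by norm_num) hlg (by norm_num)
    · push_cast
      have hlg := hlogk 4 (693147/250000) (30:ℝ) (by norm_num) (by norm_num)
      calc museq μ₀ 30 ≤ 1/((1367/50):ℝ) := c30.2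
        _ < _ := final_small (by norm_num) hlg (by norm_num)
    · push_cast
      have hlg := hlogk 4 (693147/250000) (31:ℝ) (by norm_num) (by norm_num)
      calc museq μ₀ 31 ≤ 1/((1413/50):ℝ) := c31.2
        _ < _ := final_small (by norm_num) hlg (by norm_num)
    · push_cast
      have hlg := hlogk 5 (693147/200000) (32:ℝ) (by norm_num) (by norm_num)
      calc museq μ₀ 32 ≤ 1/((2919/100):ℝ) := c32.2
        _ < _ := final_small (by norm_num) hlg (by norm_num)
    · push_cast
      have hlg := hlogk 5 (693147/200000) (33:ℝ) (by norm_num) (by norm_num)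
      calc museq μ₀ 33 ≤ 1/((753/25):ℝ) := c33.2
        _ < _ := final_small (by norm_num) hlg (by norm_num)
    · push_cast
      have hlg := hlogk 5 (693147/200000) (34:ℝ) (by norm_num) (by norm_num)
      calc museq μ₀ 34 ≤ 1/((621/20):ℝ) := c34.2
        _ < _ := final_small (by norm_num) hlg (by norm_num)
    · push_cast
      have hlg := hlogk 5 (693147/200000) (35:ℝ) (by norm_num) (by norm_num)
      calc museq μ₀ 35 ≤ 1/((1599/50):ℝ) := c35.2
        _ < _ := final_small (by norm_num) hlg (by norm_num)
    · push_cast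
      have hlg := hlogk 5 (693147/200000) (36:ℝ) (by norm_num) (by norm_num)
      calc museq μ₀ 36 ≤ 1/((3291/100):ℝ) := c36.2
        _ < _ := final_small (by norm_num) hlg (by norm_num)
    · push_cast
      have hlg := hlogk 5 (693147/200000) (37:ℝ) (by norm_num) (by norm_num)
      calc museq μ₀ 37 ≤ 1/((677/20):ℝ) := c37.2
        _ < _ := final_small (by norm_num) hlg (by norm_num)
  · exact H i hge
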